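/- Let M be an R×C sign matrix of VC dimension at most one such that no two rows of M are equal. Then there exist points x_r ∈ ℝ² on the unit circle (‖x_r‖ = 1), one for each row r, and for each column c a vector a_c ∈ ℝ² and a scalar b_c ∈ ℝ, such that for every row r and column c one has ⟨a_c, x_r⟩ + b_c ≠ 0 and M_{r,c} = 1 if and only if ⟨a_c, x_r⟩ + b_c > 0. -/

import Mathlib

/-- A sign matrix: all entries are `+1` or `-1`. -/
def IsSignMatrix {R C : Type*} (S : Matrix R C ℝ) : Prop :=
  ∀ i j, S i j = 1 ∨ S i j = -1

/-- A set `T` of columns of `S` is shattered if every sign pattern on `T` occurs as the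
restriction of some row of `S` to `T`. -/
def Shattered {R C : Type*} (S : Matrix R C ℝ) (T : Finset C) : Prop :=
  ∀ v : C → ℝ, (∀ c ∈ T, v c = 1 ∨ v c = -1) → ∃ r : R, ∀ c ∈ T, S r c = v c

/-- The VC dimension of a sign matrix: the maximum size of a shattered set of columns. -/
noncomputable def VCdim {R C : Type*} (S : Matrix R C ℝ) : ℕ :=
  sSup {k | ∃ T : Finset C, T.card = k ∧ Shattered S T}

open scoped RealInnerProductSpace

/-! ### Auxiliary material -/

/-- `A` occupies a contiguous block of positions in the list `l`. -/
def Contig {α : Type*} [DecidableEq α] (A : Finset α) (l : List α) : Prop :=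
  ∃ p q : ℕ, q ≤ l.length ∧ ∀ (i : ℕ) (hi : i < l.length), (l[i] ∈ A ↔ p ≤ i ∧ i < q)

theorem laminar_order {α : Type*} [DecidableEq α] : ∀ (n : ℕ) (s : Finset α), s.card = n →
    ∀ (F : Finset (Finset α)), (∀ A ∈ F, A ⊆ s) →
    (∀ A ∈ F, ∀ B ∈ F, A ⊆ B ∨ B ⊆ A ∨ Disjoint A B) →
    ∃ l : List α, l.Nodup ∧ l.toFinset = s ∧ ∀ A ∈ F, Contig A l := by
  intro n
  induction n using Nat.strong_induction_on with
  | _ n ih =>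
    intro s hs F hsub hlam
    by_cases hG : (F.filter (fun A => A ≠ s ∧ A.Nonempty)).Nonempty
    · -- pick A₀ of maximal card
      obtain ⟨A₀, hA₀mem, hA₀max⟩ :=
        Finset.exists_max_image _ Finset.card hG
      rw [Finset.mem_filter] at hA₀mem
      obtain ⟨hA₀F, hA₀ne, hA₀nonempty⟩ := hA₀mem
      have hA₀sub : A₀ ⊆ s := hsub _ hA₀F
      have hA₀ss : A₀ ⊂ s := hA₀sub.ssubset_of_ne hA₀ne
      have hc1 : A₀.card < n := hs ▸ Finset.card_lt_card hA₀ss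
      have hc2 : (s \ A₀).card < n := by
        rw [Finset.card_sdiff_of_subset hA₀sub]
        have := Finset.card_pos.2 hA₀nonempty
        have := Finset.card_le_card hA₀sub
        omega
      obtain ⟨l₁, hn₁, ht₁, hc₁⟩ := ih _ hc1 A₀ rfl (F.filter (· ⊆ A₀))
        (fun A hA => (Finset.mem_filter.1 hA).2)
        (fun A hA B hB => hlam _ (Finset.mem_filter.1 hA).1 _ (Finset.mem_filter.1 hB).1)
      obtain ⟨l₂, hn₂, ht₂, hc₂⟩ := ih _ hc2 (s \ A₀) rfl (F.filter (fun A => Disjoint A A₀))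
        (fun A hA => by
          rw [Finset.mem_filter] at hA
          exact Finset.subset_sdiff.2 ⟨hsub _ hA.1, hA.2⟩)
        (fun A hA B hB => hlam _ (Finset.mem_filter.1 hA).1 _ (Finset.mem_filter.1 hB).1)
      have hdisj : Disjoint l₁.toFinset l₂.toFinset := by
        rw [ht₁, ht₂]; exact Finset.disjoint_sdiff
      refine ⟨l₁ ++ l₂, ?_, ?_, ?_⟩
      · rw [List.nodup_append]
        exact ⟨hn₁, hn₂, fun a ha b hb hab => Finset.disjoint_left.1 hdisj
          (List.mem_toFinset.2 ha) (List.mem_toFinset.2 (by rw [hab]; exact hb))⟩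
      · rw [List.toFinset_append, ht₁, ht₂, Finset.union_sdiff_of_subset hA₀sub]
      · intro A hA
        -- trichotomy
        have htri : A ⊆ A₀ ∨ Disjoint A A₀ ∨ A = s := by
          by_cases hAs : A = s
          · exact Or.inr (Or.inr hAs)
          by_cases hAne : A.Nonempty
          · rcases hlam _ hA _ hA₀F with h | h | h
            · exact Or.inl h
            · left
              have hmax := hA₀max A (Finset.mem_filter.2 ⟨hA, hAs, hAne⟩)
              exact Finset.subset_of_eq (Finset.eq_of_subset_of_card_le h hmax).symm
            · exact Or.inr (Or.inl h)
          · rw [Finset.not_nonempty_iff_eq_empty] at hAne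
            exact Or.inl (hAne ▸ Finset.empty_subset _)
        have hlen : (l₁ ++ l₂).length = l₁.length + l₂.length := List.length_append
        rcases htri with h | h | h
        · obtain ⟨p, q, hq, hpq⟩ := hc₁ A (Finset.mem_filter.2 ⟨hA, h⟩)
          refine ⟨p, q, by simp; omega, fun i hi => ?_⟩
          by_cases hil : i < l₁.length
          · rw [List.getElem_append_left hil]
            exact hpq i hil
          · push_neg at hil
            rw [List.getElem_append_right hil]
            constructor
            · intro hmem
              exfalso
              have : (l₂)[i - l₁.length] ∈ l₂.toFinset := List.mem_toFinset.2 (List.getElem_mem _)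
              rw [ht₂] at this
              exact (Finset.mem_sdiff.1 this).2 (h hmem)
            · rintro ⟨h1, h2⟩; omega
        · obtain ⟨p, q, hq, hpq⟩ := hc₂ A (Finset.mem_filter.2 ⟨hA, h⟩)
          refine ⟨p + l₁.length, q + l₁.length, by simp; omega, fun i hi => ?_⟩
          by_cases hil : i < l₁.length
          · rw [List.getElem_append_left hil]
            constructor
            · intro hmem
              exfalso
              have : l₁[i] ∈ l₁.toFinset := List.mem_toFinset.2 (List.getElem_mem _)
              rw [ht₁] at this
              exact Finset.disjoint_left.1 h hmem this
            · rintro ⟨h1, h2⟩; omega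
          · push_neg at hil
            rw [List.getElem_append_right hil]
            have hi2 : i - l₁.length < l₂.length := by rw [hlen] at hi; omega
            rw [hpq _ hi2]
            omega
        · subst h
          refine ⟨0, (l₁ ++ l₂).length, le_refl _, fun i hi => ?_⟩
          simp only [Nat.zero_le, true_and, hi, iff_true]
          have : (l₁ ++ l₂)[i] ∈ (l₁ ++ l₂).toFinset := List.mem_toFinset.2 (List.getElem_mem _)
          rw [List.toFinset_append, ht₁, ht₂] at this
          rw [Finset.union_sdiff_of_subset hA₀sub] at this
          exact this
    · -- base case: every A in F is s or ∅
      refine ⟨s.toList, Finset.nodup_toList s, Finset.toList_toFinset s, fun A hA => ?_⟩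
      have : A = s ∨ A = ∅ := by
        by_contra hcon
        push_neg at hcon
        exact hG ⟨A, Finset.mem_filter.2 ⟨hA, hcon.1, hcon.2⟩⟩
      rcases this with h | h
      · subst h
        refine ⟨0, A.toList.length, le_refl _, fun i hi => ?_⟩
        simp only [Nat.zero_le, true_and, hi, iff_true]
        exact Finset.mem_toList.1 (List.getElem_mem _)
      · subst h
        exact ⟨0, 0, Nat.zero_le _, fun i hi => by simp⟩

noncomputable def vpt (u v : ℝ) : EuclideanSpace ℝ (Fin 2) :=
  (WithLp.equiv 2 (Fin 2 → ℝ)).symm ![u, v]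

lemma vpt_norm (t : ℝ) : ‖vpt ((1-t^2)/(1+t^2)) (2*t/(1+t^2))‖ = 1 := by
  have h : (0:ℝ) < 1 + t^2 := by positivity
  rw [EuclideanSpace.norm_eq]
  simp only [vpt, WithLp.equiv_symm_apply, WithLp.ofLp_toLp, Fin.sum_univ_two, Matrix.cons_val_zero,
    Matrix.cons_val_one, Matrix.head_cons, Real.norm_eq_abs, sq_abs]
  rw [show ((1-t^2)/(1+t^2))^2 + (2*t/(1+t^2))^2 = 1 by field_simp; ring]
  exact Real.sqrt_one

lemma vpt_inner (u v w z : ℝ) : ⟪vpt u v, vpt w z⟫ = u * w + v * z := by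
  simp only [vpt, PiLp.inner_apply, WithLp.equiv_symm_apply, WithLp.ofLp_toLp, Fin.sum_univ_two,
    Matrix.cons_val_zero, Matrix.cons_val_one, Matrix.head_cons, RCLike.inner_apply,
    conj_trivial]
  ring

lemma vpt_key (s α β t : ℝ) :
    ⟪vpt (s*(α*β-1)/2) (-(s*(α+β))/2), vpt ((1-t^2)/(1+t^2)) (2*t/(1+t^2))⟫
      + s*(α*β+1)/2 = s*((t-α)*(t-β))/(1+t^2) := by
  have h : (1:ℝ) + t^2 ≠ 0 := by positivity
  rw [vpt_inner]
  field_simp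
  ring

lemma sgn_ne {x y : ℝ} (hx : x = 1 ∨ x = -1) (hy : y = 1 ∨ y = -1) (h : x ≠ y) : x = -y := by
  rcases hx with h1 | h1 <;> rcases hy with h2 | h2 <;> subst h1 <;> subst h2 <;> norm_num at *

/-! ### Main theorem -/

/-- a sign matrix of VC dimension at most one with pairwise distinct rows can be
embedded in the plane using half-planes, with the rows mapped to points on the unit circle:
row `r` goes to a unit vector `x r ∈ ℝ²`, column `c` to an (affine) halfplane
`{z : ⟪a c, z⟫ + b c > 0}`, no point lies on the boundary of a halfplane, and
`M r c = 1` iff `x r` lies in the halfplane of `c`. -/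
theorem embedding_in_plane_of_vcdim_le_one
    (R C : ℕ) (M : Matrix (Fin R) (Fin C) ℝ) (hM : IsSignMatrix M)
    (hVC : VCdim M ≤ 1)
    (hrows : ∀ r r' : Fin R, (∀ c, M r c = M r' c) → r = r') :
    ∃ (x : Fin R → EuclideanSpace ℝ (Fin 2)) (a : Fin C → EuclideanSpace ℝ (Fin 2))
      (b : Fin C → ℝ),
      (∀ r, ‖x r‖ = 1) ∧
      (∀ r c, ⟪a c, x r⟫ + b c ≠ 0) ∧
      (∀ r c, M r c = 1 ↔ 0 < ⟪a c, x r⟫ + b c) := by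
  rcases Nat.eq_zero_or_pos R with hR | hR
  · subst hR
    exact ⟨fun r => r.elim0, fun _ => 0, fun _ => 1,
      fun r => r.elim0, fun r => r.elim0, fun r => r.elim0⟩
  set r0 : Fin R := ⟨0, hR⟩ with hr0
  set N : Fin C → Finset (Fin R) := fun c => Finset.univ.filter (fun r => M r c ≠ M r0 c) with hN
  have hmemN : ∀ c r, r ∈ N c ↔ M r c ≠ M r0 c := by
    intro c r; simp [hN]
  -- laminarity via VC dimension
  have hlam : ∀ c d : Fin C, N c ⊆ N d ∨ N d ⊆ N c ∨ Disjoint (N c) (N d) := by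
    intro c d
    by_contra hcon
    push_neg at hcon
    obtain ⟨hns1, hns2, hnd⟩ := hcon
    obtain ⟨r2, hr2c, hr2d⟩ := Finset.not_subset.1 hns1
    obtain ⟨r3, hr3d, hr3c⟩ := Finset.not_subset.1 hns2
    obtain ⟨r1, hr1c, hr1d⟩ := Finset.not_disjoint_iff.1 hnd
    have hcd : c ≠ d := by
      rintro rfl
      exact hns1 (le_refl _)
    have hshat : Shattered M {c, d} := by
      intro v hv
      have hvc := hv c (Finset.mem_insert_self _ _)
      have hvd := hv d (Finset.mem_insert.2 (Or.inr (Finset.mem_singleton_self _)))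
      have key : ∀ e ∈ ({c, d} : Finset (Fin C)), ∀ r : Fin R,
          (v e = M r0 e → (r ∈ N e → False) → M r e = v e) ∧
          (v e = -M r0 e → r ∈ N e → M r e = v e) := by
        intro e he r
        constructor
        · intro hve hnmem
          have : M r e = M r0 e := by
            by_contra hne
            exact hnmem ((hmemN e r).2 hne)
          rw [this, hve]
        · intro hve hmem
          have := (hmemN e r).1 hmem
          rw [sgn_ne (hM r e) (hM r0 e) this, hve]
      have hc' : v c = M r0 c ∨ v c = -M r0 c := by
        by_cases h : v c = M r0 c
        · exact Or.inl h
        · exact Or.inr (sgn_ne hvc (hM r0 c) h)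
      have hd' : v d = M r0 d ∨ v d = -M r0 d := by
        by_cases h : v d = M r0 d
        · exact Or.inl h
        · exact Or.inr (sgn_ne hvd (hM r0 d) h)
      have hmemc : ∀ e ∈ ({c, d} : Finset (Fin C)), e = c ∨ e = d := by
        intro e he
        rcases Finset.mem_insert.1 he with h | h
        · exact Or.inl h
        · exact Or.inr (Finset.mem_singleton.1 h)
      rcases hc' with hc1 | hc1 <;> rcases hd' with hd1 | hd1
      · refine ⟨r0, fun e he => ?_⟩
        rcases hmemc e he with rfl | rfl
        · rw [hc1]
        · rw [hd1]
      · -- agrees on c, differs on d : r3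
        refine ⟨r3, fun e he => ?_⟩
        rcases hmemc e he with rfl | rfl
        · exact (key e he r3).1 hc1 (fun h => hr3c h)
        · exact (key e he r3).2 hd1 hr3d
      · refine ⟨r2, fun e he => ?_⟩
        rcases hmemc e he with rfl | rfl
        · exact (key e he r2).2 hc1 hr2c
        · exact (key e he r2).1 hd1 (fun h => hr2d h)
      · refine ⟨r1, fun e he => ?_⟩
        rcases hmemc e he with rfl | rfl
        · exact (key e he r1).2 hc1 hr1c
        · exact (key e he r1).2 hd1 hr1d
    -- 2 ≤ VCdim M
    have hbdd : BddAbove {k | ∃ T : Finset (Fin C), T.card = k ∧ Shattered M T} := by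
      refine ⟨C, fun k hk => ?_⟩
      obtain ⟨T, hT, _⟩ := hk
      calc k = T.card := hT.symm
        _ ≤ (Finset.univ : Finset (Fin C)).card := Finset.card_le_univ T
        _ = C := by simp
    have h2 : 2 ≤ VCdim M := le_csSup hbdd ⟨{c, d}, Finset.card_pair hcd, hshat⟩
    omega
  -- get the ordering
  obtain ⟨l, hnodup, htf, hcontig⟩ := laminar_order (Finset.univ : Finset (Fin R)).card
    Finset.univ rfl (Finset.image N Finset.univ)
    (fun A _ => A.subset_univ)
    (by
      intro A hA B hB
      obtain ⟨c, _, rfl⟩ := Finset.mem_image.1 hA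
      obtain ⟨d, _, rfl⟩ := Finset.mem_image.1 hB
      exact hlam c d)
  have hlenl : l.length = R := by
    have h1 : l.toFinset.card = l.length := List.toFinset_card_of_nodup hnodup
    rw [htf] at h1
    simpa using h1.symm
  have hmeml : ∀ r : Fin R, r ∈ l := by
    intro r
    rw [← List.mem_toFinset, htf]
    exact Finset.mem_univ r
  have P : ∀ c, Contig (N c) l := fun c =>
    hcontig (N c) (Finset.mem_image_of_mem N (Finset.mem_univ c))
  choose p q hq hpq using P
  set p' : Fin C → ℕ := fun c => min (p c) (q c) with hp'
  have hpq' : ∀ c (i : ℕ) (hi : i < l.length), (l[i] ∈ N c ↔ p' c ≤ i ∧ i < q c) := by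
    intro c i hi
    rw [hpq c i hi]
    simp only [hp']
    omega
  have hple : ∀ c, p' c ≤ q c := fun c => min_le_right _ _
  -- definitions
  set t : Fin R → ℝ := fun r => (l.idxOf r : ℝ) with ht
  set xx : Fin R → EuclideanSpace ℝ (Fin 2) := fun r =>
    vpt ((1 - t r ^ 2) / (1 + t r ^ 2)) (2 * t r / (1 + t r ^ 2)) with hxx
  set al : Fin C → ℝ := fun c => (p' c : ℝ) - 1/2 with hal
  set be : Fin C → ℝ := fun c => (q c : ℝ) - 1/2 with hbe
  set aa : Fin C → EuclideanSpace ℝ (Fin 2) := fun c =>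
    vpt (M r0 c * (al c * be c - 1) / 2) (-(M r0 c * (al c + be c)) / 2) with haa
  set bb : Fin C → ℝ := fun c => M r0 c * (al c * be c + 1) / 2 with hbb
  have hkey : ∀ r c, ⟪aa c, xx r⟫ + bb c
      = M r0 c * ((t r - al c) * (t r - be c)) / (1 + t r ^ 2) := by
    intro r c
    exact vpt_key (M r0 c) (al c) (be c) (t r)
  have main : ∀ r c, (⟪aa c, xx r⟫ + bb c ≠ 0) ∧ (M r c = 1 ↔ 0 < ⟪aa c, xx r⟫ + bb c) := by
    intro r c
    have hi : l.idxOf r < l.length := List.idxOf_lt_length_iff.2 (hmeml r)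
    have hgeti : l[l.idxOf r] = r := List.getElem_idxOf hi
    have hmemiff : r ∈ N c ↔ p' c ≤ l.idxOf r ∧ l.idxOf r < q c := by
      have h0 := hpq' c (l.idxOf r) hi
      rw [hgeti] at h0
      exact h0
    have hpos : (0:ℝ) < 1 + t r ^ 2 := by positivity
    rw [hkey r c]
    by_cases hr : r ∈ N c
    · obtain ⟨h1, h2⟩ := hmemiff.1 hr
      have hprod : (t r - al c) * (t r - be c) < 0 := by
        have hc1 : (p' c : ℝ) ≤ (l.idxOf r : ℝ) := Nat.cast_le.2 h1
        have hc2 : ((l.idxOf r : ℕ) : ℝ) + 1 ≤ (q c : ℝ) := by exact_mod_cast h2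
        apply mul_neg_of_pos_of_neg
        · simp only [ht, hal]; linarith
        · simp only [ht, hbe]; linarith
      have hMrc : M r c = -M r0 c := sgn_ne (hM r c) (hM r0 c) ((hmemN c r).1 hr)
      rcases hM r0 c with hs | hs
      · rw [hs] at hMrc ⊢
        constructor
        · intro hcon
          rw [one_mul] at hcon
          exact absurd hcon (ne_of_lt (div_neg_of_neg_of_pos hprod hpos))
        · rw [hMrc, one_mul]
          constructor
          · intro h; norm_num at h
          · intro h
            exact absurd h (not_lt.2 (le_of_lt (div_neg_of_neg_of_pos hprod hpos)))
      · rw [hs] at hMrc ⊢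
        have hE : 0 < -1 * ((t r - al c) * (t r - be c)) / (1 + t r ^ 2) := by
          apply div_pos _ hpos
          nlinarith
        refine ⟨ne_of_gt hE, ?_⟩
        rw [hMrc]
        simp only [neg_neg, hE, iff_true]
    · have hout : l.idxOf r < p' c ∨ q c ≤ l.idxOf r := by
        have := hmemiff.not.1 hr
        omega
      have hprod : 0 < (t r - al c) * (t r - be c) := by
        have hpq2 : (p' c : ℝ) ≤ (q c : ℝ) := Nat.cast_le.2 (hple c)
        rcases hout with h | h
        · have hc1 : ((l.idxOf r : ℕ) : ℝ) + 1 ≤ (p' c : ℝ) := by exact_mod_cast h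
          apply mul_pos_of_neg_of_neg
          · simp only [ht, hal]; linarith
          · simp only [ht, hbe]; linarith
        · have hc1 : (q c : ℝ) ≤ ((l.idxOf r : ℕ) : ℝ) := Nat.cast_le.2 h
          apply mul_pos
          · simp only [ht, hal]; linarith
          · simp only [ht, hbe]; linarith
      have hMrc : M r c = M r0 c := by
        by_contra hne
        exact hr ((hmemN c r).2 hne)
      rcases hM r0 c with hs | hs
      · rw [hs] at hMrc ⊢
        have hE : 0 < 1 * ((t r - al c) * (t r - be c)) / (1 + t r ^ 2) := by
          apply div_pos _ hpos
          nlinarith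
        exact ⟨ne_of_gt hE, by rw [hMrc]; simp only [hE, iff_true]⟩
      · rw [hs] at hMrc ⊢
        have hE : -1 * ((t r - al c) * (t r - be c)) / (1 + t r ^ 2) < 0 := by
          apply div_neg_of_neg_of_pos _ hpos
          nlinarith
        refine ⟨ne_of_lt hE, ?_⟩
        rw [hMrc]
        constructor
        · intro h; norm_num at h
        · intro h; exact absurd h (not_lt.2 (le_of_lt hE))
  exact ⟨xx, aa, bb, fun r => vpt_norm (t r), fun r c => (main r c).1, fun r c => (main r c).2⟩
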